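/- The subgroup Γ₀(2) of SL₂(ℤ) is generated by the two elements T = (1 1; 0 1) and S T² S T, where S = (0 −1; 1 0). -/

import Mathlib

open ModularGroup

section Aux
open Matrix CongruenceSubgroup


local notation "SL2" => Matrix.SpecialLinearGroup (Fin 2) ℤ

theorem neg_one_fin_two : (-1 : Matrix (Fin 2) (Fin 2) ℤ) = !![-1, 0; 0, -1] := by
  rw [Matrix.one_fin_two]; ext i j; fin_cases i <;> fin_cases j <;> simp

theorem emod_lt_abs (a b : ℤ) (h : b ≠ 0) : a % b < |b| := by
  rcases lt_or_gt_of_ne h with hb | hb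
  · rw [abs_of_neg hb, ← Int.emod_neg]
    exact Int.emod_lt_of_pos a (by linarith)
  · rw [abs_of_pos hb]; exact Int.emod_lt_of_pos a hb

def Hgen : Subgroup SL2 :=
  Subgroup.closure {ModularGroup.T, ModularGroup.S * ModularGroup.T ^ 2 *
      ModularGroup.S * ModularGroup.T}

def V : SL2 := ⟨!![1,0;2,1], by norm_num [Matrix.det_fin_two_of]⟩

open Matrix.SpecialLinearGroup

theorem T_mem : T ∈ Hgen := Subgroup.subset_closure (by simp)
theorem U_mem : S * T^2 * S * T ∈ Hgen := Subgroup.subset_closure (by simp)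

theorem U_sq : (S * T^2 * S * T : SL2) ^ 2 = -1 := by
  apply Subtype.ext
  simp only [coe_mul, coe_pow, coe_neg, coe_one, coe_S, coe_T]
  norm_num [pow_two, Matrix.mul_fin_two]
  rw [neg_one_fin_two]

theorem neg_one_mem : (-1 : SL2) ∈ Hgen := U_sq ▸ pow_mem U_mem 2

theorem V_eq : V = -1 * (T * (S * T^2 * S * T)⁻¹) := by
  apply Subtype.ext
  simp only [V, coe_mul, coe_pow, coe_neg, coe_one, coe_S, coe_T, coe_inv,
    Matrix.adjugate_fin_two]
  norm_num [pow_two, Matrix.mul_fin_two, Matrix.adjugate_fin_two, neg_one_fin_two]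

theorem V_mem : V ∈ Hgen := by
  rw [V_eq]; exact mul_mem neg_one_mem (mul_mem T_mem (inv_mem U_mem))

theorem coe_V_zpow (n : ℤ) : ((V ^ n : SL2) : Matrix (Fin 2) (Fin 2) ℤ) = !![1, 0; 2*n, 1] := by
  induction n using Int.induction_on with
  | zero => simp [coe_one, Matrix.one_fin_two]
  | succ k h => rw [_root_.zpow_add, zpow_one, coe_mul, h]; simp [V, Matrix.mul_fin_two]; ring_nf
  | pred k h =>
    rw [_root_.zpow_sub, zpow_one, coe_mul, h, coe_inv]
    simp [V, Matrix.adjugate_fin_two, Matrix.mul_fin_two]; ring_nf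

theorem key : ∀ n : ℕ, ∀ g : SL2, g ∈ Gamma0 2 → (g 1 0).natAbs = n → g ∈ Hgen := by
  intro n
  induction n using Nat.strong_induction_on with
  | _ n ih =>
  intro g hg hn
  have hdet : g 0 0 * g 1 1 - g 0 1 * g 1 0 = 1 := by
    have := g.2
    rwa [Matrix.det_fin_two] at this
  have hc2 : (2 : ℤ) ∣ g 1 0 := by
    have := Gamma0_mem.mp hg
    exact_mod_cast (ZMod.intCast_zmod_eq_zero_iff_dvd _ 2).mp this
  have heta : (g : Matrix (Fin 2) (Fin 2) ℤ) = !![g 0 0, g 0 1; g 1 0, g 1 1] :=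
    Matrix.eta_fin_two _
  by_cases hc : g 1 0 = 0
  · -- c = 0 case
    have had : g 0 0 * g 1 1 = 1 := by rw [hc] at hdet; linarith
    rcases Int.mul_eq_one_iff_eq_one_or_neg_one.mp had with ⟨h1, h2⟩ | ⟨h1, h2⟩
    · have hgeq : g = T ^ (g 0 1) := by
        apply Subtype.ext
        ext i j
        fin_cases i <;> fin_cases j <;> simp [coe_T_zpow, hc, h1, h2]
      rw [hgeq]; exact zpow_mem T_mem _
    · have hgeq : g = -1 * T ^ (-(g 0 1)) := by
        apply Subtype.ext
        rw [coe_mul, Matrix.SpecialLinearGroup.coe_neg, Matrix.SpecialLinearGroup.coe_one,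
          coe_T_zpow, neg_one_fin_two, Matrix.mul_fin_two]
        ext i j
        fin_cases i <;> fin_cases j <;> simp [hc, h1, h2]
      rw [hgeq]; exact mul_mem neg_one_mem (zpow_mem T_mem _)
  · -- c ≠ 0 case
    have hodd : ¬ (2 : ℤ) ∣ g 0 0 := by
      intro h2a
      have : (2:ℤ) ∣ 1 := by
        rw [← hdet]
        exact dvd_sub (h2a.mul_right _) (hc2.mul_left _)
      norm_num at this
    set a' : ℤ := g 0 0 % g 1 0 with ha'
    have hka : a' = g 0 0 + (-(g 0 0 / g 1 0)) * g 1 0 := by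
      rw [ha', Int.emod_def]; ring
    have h1 : 0 ≤ a' := Int.emod_nonneg _ hc
    have h2 : a' < |g 1 0| := emod_lt_abs _ _ hc
    have hodd' : ¬ (2 : ℤ) ∣ a' := by
      intro h
      apply hodd
      rw [hka] at h
      have : (2:ℤ) ∣ (-(g 0 0 / g 1 0)) * g 1 0 := hc2.mul_left _
      omega
    have ha'pos : 0 < a' := by
      rcases h1.lt_or_eq with h | h
      · exact h
      · exact absurd (h ▸ dvd_zero 2) hodd'
    -- second reduction
    set q : ℤ := (g 1 0 + a') / (2 * a') with hq
    set c' : ℤ := (g 1 0 + a') % (2 * a') - a' with hc'def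
    have h2a : (0:ℤ) < 2 * a' := by linarith
    have h3 : 0 ≤ (g 1 0 + a') % (2 * a') := Int.emod_nonneg _ (ne_of_gt h2a)
    have h4 : (g 1 0 + a') % (2 * a') < 2 * a' := Int.emod_lt_of_pos _ h2a
    have hcq : c' = g 1 0 + 2 * (-q) * a' := by
      rw [hc'def, hq, Int.emod_def]; ring
    have heven : (2:ℤ) ∣ c' := by
      rw [hcq]
      exact dvd_add hc2 ⟨(-q) * a', by ring⟩
    have habs : |c'| < a' := by
      have hne : c' ≠ -a' := by
        intro h
        apply hodd'
        have : (2:ℤ) ∣ -a' := h ▸ heven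
        omega
      rw [abs_lt]
      constructor <;> [skip; omega]
      rcases lt_or_eq_of_le (by omega : -a' ≤ c') with h | h
      · exact h
      · exact absurd h.symm hne
    -- the reduced element
    set k : ℤ := -(g 0 0 / g 1 0) with hk
    set m : ℤ := -q with hm
    set g' : SL2 := V ^ m * (T ^ k * g) with hg'
    have hcoe : (g' : Matrix (Fin 2) (Fin 2) ℤ) =
        !![g 0 0 + k * g 1 0, g 0 1 + k * g 1 1;
           2 * m * (g 0 0 + k * g 1 0) + g 1 0, 2 * m * (g 0 1 + k * g 1 1) + g 1 1] := by
      rw [hg', coe_mul, coe_mul, coe_V_zpow, coe_T_zpow, heta, Matrix.mul_fin_two,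
        Matrix.mul_fin_two]
      ext i j
      fin_cases i <;> fin_cases j <;> simp
    have hg'10 : g' 1 0 = c' := by
      have h5 : g' 1 0 = (g' : Matrix (Fin 2) (Fin 2) ℤ) 1 0 := rfl
      rw [h5, hcoe, hcq, ← hka]
      simp
      ring
    have hg'mem : g' ∈ Gamma0 2 := by
      rw [Gamma0_mem, hg'10]
      exact_mod_cast (ZMod.intCast_zmod_eq_zero_iff_dvd _ 2).mpr heven
    have hlt : (g' 1 0).natAbs < n := by
      rw [hg'10, ← hn]
      have habs2 : |c'| < |g 1 0| := lt_trans habs h2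
      rw [Int.abs_eq_natAbs, Int.abs_eq_natAbs] at habs2
      exact_mod_cast habs2
    have hg'H : g' ∈ Hgen := ih _ hlt g' hg'mem rfl
    have : g = T ^ (-k) * (V ^ (-m) * g') := by
      rw [hg']; group
    rw [this]
    exact mul_mem (zpow_mem T_mem _) (mul_mem (zpow_mem V_mem _) hg'H)


end Aux

/-- `Γ₀(2)` is generated by `T = (1 1; 0 1)` and `S T² S T`, where `S = (0 -1; 1 0)`. -/
theorem stmt17 :
    Subgroup.closure {ModularGroup.T, ModularGroup.S * ModularGroup.T ^ 2 *
      ModularGroup.S * ModularGroup.T} = CongruenceSubgroup.Gamma0 2 := by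
  apply le_antisymm
  · rw [Subgroup.closure_le]
    rintro x (rfl | rfl)
    · rw [SetLike.mem_coe, CongruenceSubgroup.Gamma0_mem]
      simp [coe_T]
    · rw [SetLike.mem_coe, CongruenceSubgroup.Gamma0_mem]
      have : ((S * T^2 * S * T : Matrix.SpecialLinearGroup (Fin 2) ℤ) :
          Matrix (Fin 2) (Fin 2) ℤ) 1 0 = 2 := by
        simp only [Matrix.SpecialLinearGroup.coe_mul, Matrix.SpecialLinearGroup.coe_pow,
          coe_S, coe_T]
        norm_num [pow_two, Matrix.mul_fin_two]
      rw [show ((S * T^2 * S * T : Matrix.SpecialLinearGroup (Fin 2) ℤ) 1 0) = (2:ℤ) from this]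
      decide
  · intro g hg
    exact key (g 1 0).natAbs g hg rfl
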